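/- An affine Lorentz transformation x ↦ Bx + t with B ∈ L_n⁺ (upper-triangular with λ = 1 in the top-left entry after the normalization, i.e. of the stated form) and t = (v, δ, 0) fixes the point u₀ = (0,…,0,1) if and only if λ = 1, v = ‖β‖²/2, and δ = Aβ. Consequently the stabilizer of u₀ in the lightlike Poincaré group LP(n) is isomorphic to O(n) ⋉ ℝⁿ, the Euclidean group Euc_n. -/

import Mathlib

open scoped Matrix

/-- The model of Minkowski space `ℝ^{n+2}` with coordinates `(v, δ, u)`. -/
abbrev Mink (n : ℕ) := ℝ × (Fin n → ℝ) × ℝ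

/-- The block upper-triangular linear map
`B = [[λ, βᵀ, a], [0, A, α], [0, 0, λ⁻¹]]` acting on `(v, δ, u)`. -/
noncomputable def Bmap {n : ℕ} (lam : ℝ) (β : Fin n → ℝ) (a : ℝ)
    (A : Matrix (Fin n) (Fin n) ℝ) (α : Fin n → ℝ) (X : Mink n) : Mink n :=
  (lam * X.1 + β ⬝ᵥ X.2.1 + a * X.2.2, A.mulVec X.2.1 + X.2.2 • α, lam⁻¹ * X.2.2)

/-- The linear part of an element of the lightlike Poincaré group. -/
noncomputable def LPlin {n : ℕ} (lam : ℝ) (β : Fin n → ℝ)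
    (A : Matrix (Fin n) (Fin n) ℝ) (X : Mink n) : Mink n :=
  Bmap lam β (-(lam⁻¹ / 2) * ∑ i, β i ^ 2) A (-(lam⁻¹ • A.mulVec β)) X

/-- An affine element `x ↦ Bx + t` of the lightlike Poincaré group `LP(n)`. -/
noncomputable def LPaff {n : ℕ} (lam : ℝ) (β : Fin n → ℝ)
    (A : Matrix (Fin n) (Fin n) ℝ) (tr : Mink n) (X : Mink n) : Mink n :=
  LPlin lam β A X + tr

/-- The point `u₀ = (0, …, 0, 1)` of the half-space `C_n = {u > 0}`. -/
def basePt (n : ℕ) : Mink n := (0, 0, 1)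

namespace LPproof

variable {n : ℕ}

/-! ### Orthogonality helpers -/

lemma orth_mul_t {A : Matrix (Fin n) (Fin n) ℝ}
    (hA : A ∈ Matrix.orthogonalGroup (Fin n) ℝ) : A * Aᵀ = 1 := by
  have := (Matrix.mem_orthogonalGroup_iff _ _).mp hA
  exact this

lemma orth_t_mul {A : Matrix (Fin n) (Fin n) ℝ}
    (hA : A ∈ Matrix.orthogonalGroup (Fin n) ℝ) : Aᵀ * A = 1 := by
  have := (Matrix.mem_orthogonalGroup_iff' _ _).mp hA
  exact this

lemma orth_transpose_mem {A : Matrix (Fin n) (Fin n) ℝ}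
    (hA : A ∈ Matrix.orthogonalGroup (Fin n) ℝ) :
    Aᵀ ∈ Matrix.orthogonalGroup (Fin n) ℝ := by
  rw [Matrix.mem_orthogonalGroup_iff, Matrix.transpose_transpose]
  exact orth_t_mul hA

lemma mulVec_t_mulVec {A : Matrix (Fin n) (Fin n) ℝ}
    (hA : A ∈ Matrix.orthogonalGroup (Fin n) ℝ) (x : Fin n → ℝ) :
    A.mulVec (Aᵀ.mulVec x) = x := by
  rw [Matrix.mulVec_mulVec, orth_mul_t hA, Matrix.one_mulVec]

lemma t_mulVec_mulVec {A : Matrix (Fin n) (Fin n) ℝ}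
    (hA : A ∈ Matrix.orthogonalGroup (Fin n) ℝ) (x : Fin n → ℝ) :
    Aᵀ.mulVec (A.mulVec x) = x := by
  rw [Matrix.mulVec_mulVec, orth_t_mul hA, Matrix.one_mulVec]

lemma dot_t_mulVec (A : Matrix (Fin n) (Fin n) ℝ) (x y : Fin n → ℝ) :
    Aᵀ.mulVec x ⬝ᵥ y = x ⬝ᵥ A.mulVec y := by
  rw [Matrix.mulVec_transpose, Matrix.dotProduct_mulVec]

lemma dot_mulVec_mulVec {A : Matrix (Fin n) (Fin n) ℝ}
    (hA : A ∈ Matrix.orthogonalGroup (Fin n) ℝ) (x y : Fin n → ℝ) :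
    A.mulVec x ⬝ᵥ A.mulVec y = x ⬝ᵥ y := by
  rw [Matrix.dotProduct_mulVec, ← Matrix.mulVec_transpose, Matrix.mulVec_mulVec,
    orth_t_mul hA, Matrix.one_mulVec]

lemma sum_sq_eq (β : Fin n → ℝ) : ∑ i, β i ^ 2 = β ⬝ᵥ β := by
  simp [dotProduct, sq]

/-! ### Explicit form and composition of `LPaff` -/

lemma LPaff_def (lam : ℝ) (β : Fin n → ℝ) (A : Matrix (Fin n) (Fin n) ℝ)
    (tr : Mink n) (X : Mink n) :
    LPaff lam β A tr X =
      (lam * X.1 + β ⬝ᵥ X.2.1 + -(lam⁻¹ / 2) * (β ⬝ᵥ β) * X.2.2 + tr.1,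
       A.mulVec X.2.1 + X.2.2 • (-(lam⁻¹ • A.mulVec β)) + tr.2.1,
       lam⁻¹ * X.2.2 + tr.2.2) := by
  simp [LPaff, LPlin, Bmap, sum_sq_eq, Prod.ext_iff]

lemma LPaff_one (X : Mink n) : LPaff 1 0 1 0 X = X := by
  simp [LPaff_def, Prod.ext_iff]

lemma LPaff_comp (l1 l2 : ℝ) (hl1 : l1 ≠ 0) (hl2 : l2 ≠ 0)
    (β1 β2 : Fin n → ℝ) (A1 A2 : Matrix (Fin n) (Fin n) ℝ)
    (hA2 : A2 ∈ Matrix.orthogonalGroup (Fin n) ℝ) (t1 t2 : Mink n) (X : Mink n) :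
    LPaff l1 β1 A1 t1 (LPaff l2 β2 A2 t2 X) =
      LPaff (l1 * l2) (l1 • β2 + A2ᵀ.mulVec β1) (A1 * A2)
        (LPlin l1 β1 A1 t2 + t1) X := by
  have key : (l1 • β2 + A2ᵀ.mulVec β1) ⬝ᵥ (l1 • β2 + A2ᵀ.mulVec β1)
      = l1 ^ 2 * (β2 ⬝ᵥ β2) + 2 * l1 * (β1 ⬝ᵥ A2.mulVec β2) + β1 ⬝ᵥ β1 := by
    have h1 : A2ᵀ.mulVec β1 ⬝ᵥ A2ᵀ.mulVec β1 = β1 ⬝ᵥ β1 :=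
      dot_mulVec_mulVec (orth_transpose_mem hA2) β1 β1
    have h2 : A2ᵀ.mulVec β1 ⬝ᵥ β2 = β1 ⬝ᵥ A2.mulVec β2 := dot_t_mulVec A2 β1 β2
    have h3 : β2 ⬝ᵥ A2ᵀ.mulVec β1 = β1 ⬝ᵥ A2.mulVec β2 := by
      rw [dotProduct_comm, h2]
    simp only [add_dotProduct, dotProduct_add, smul_dotProduct,
      dotProduct_smul, h1, h2, h3, smul_eq_mul]
    ring
  refine Prod.ext ?_ (Prod.ext ?_ ?_)
  · simp only [LPaff_def, LPlin, Bmap, LPaff]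
    simp only [Prod.fst_add, Prod.snd_add, sum_sq_eq, key]
    simp only [dotProduct_add, dotProduct_smul, add_dotProduct,
      smul_dotProduct, dotProduct_neg, neg_dotProduct, smul_eq_mul,
      Pi.add_apply, Pi.smul_apply, Pi.neg_apply, dot_t_mulVec]
    rw [Matrix.dotProduct_mulVec β1 A2, ← Matrix.mulVec_transpose]
    field_simp
    ring
  · simp only [LPaff_def, LPlin, Bmap, LPaff]
    simp only [Prod.fst_add, Prod.snd_add]
    simp only [Matrix.mulVec_add, Matrix.mulVec_smul, Matrix.mulVec_neg,
      Matrix.mulVec_mulVec, smul_neg, smul_smul]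
    have h4 : (A1 * A2) * A2ᵀ = A1 := by
      rw [Matrix.mul_assoc, orth_mul_t hA2, Matrix.mul_one]
    rw [h4]
    have e1 : (l1 * l2)⁻¹ = l1⁻¹ * l2⁻¹ := by
      rw [mul_inv]
    rw [e1]
    funext i
    simp only [Pi.add_apply, Pi.smul_apply, Pi.neg_apply, smul_eq_mul]
    field_simp
    ring
  · simp only [LPaff_def, LPlin, Bmap, LPaff]
    simp only [Prod.snd_add]
    rw [mul_inv]
    ring

/-! ### The Euclidean-type stabilizer maps -/

/-- The explicit form of a stabilizer element, parametrized by `b = Aβ` and `A`. -/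
noncomputable def F (b : Fin n → ℝ) (A : Matrix (Fin n) (Fin n) ℝ) (X : Mink n) : Mink n :=
  (X.1 + b ⬝ᵥ A.mulVec X.2.1 + (1 - X.2.2) * (b ⬝ᵥ b) / 2,
   A.mulVec X.2.1 + (1 - X.2.2) • b, X.2.2)

lemma F_eq_LPaff {A : Matrix (Fin n) (Fin n) ℝ}
    (hA : A ∈ Matrix.orthogonalGroup (Fin n) ℝ) (b : Fin n → ℝ) (X : Mink n) :
    F b A X = LPaff 1 (Aᵀ.mulVec b) A ((b ⬝ᵥ b) / 2, b, 0) X := by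
  rw [LPaff_def]
  refine Prod.ext ?_ (Prod.ext ?_ ?_)
  · simp only [F, dot_t_mulVec, dot_mulVec_mulVec (orth_transpose_mem hA)]
    ring
  · simp only [F, mulVec_t_mulVec hA, inv_one, one_smul, smul_neg, sub_smul, one_smul, smul_smul]
    funext i
    simp only [Pi.add_apply, Pi.sub_apply, Pi.smul_apply, Pi.neg_apply, smul_eq_mul]
    ring
  · simp [F]

lemma F_id (X : Mink n) : F 0 1 X = X := by
  simp [F]

lemma F_comp {A1 : Matrix (Fin n) (Fin n) ℝ}
    (hA1 : A1 ∈ Matrix.orthogonalGroup (Fin n) ℝ) (b1 b2 : Fin n → ℝ)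
    (A2 : Matrix (Fin n) (Fin n) ℝ) (X : Mink n) :
    F b1 A1 (F b2 A2 X) = F (b1 + A1.mulVec b2) (A1 * A2) X := by
  have h1 : b1 ⬝ᵥ A1.mulVec b2 = A1.mulVec b2 ⬝ᵥ b1 := dotProduct_comm _ _
  refine Prod.ext ?_ (Prod.ext ?_ ?_)
  · simp only [F, Matrix.mulVec_add, Matrix.mulVec_smul, Matrix.mulVec_mulVec,
      dotProduct_add, dotProduct_smul, add_dotProduct,
      smul_eq_mul, dot_mulVec_mulVec hA1]
    rw [← Matrix.mulVec_mulVec, dot_mulVec_mulVec hA1, ← h1]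
    ring
  · simp only [F, Matrix.mulVec_add, Matrix.mulVec_smul, Matrix.mulVec_mulVec]
    funext i
    simp only [Pi.add_apply, Pi.smul_apply, smul_eq_mul]
    ring
  · simp [F]

/-- `F b A` as a permutation, for `A` in the orthogonal group. -/
noncomputable def Fperm (b : Fin n → ℝ) (A : Matrix.orthogonalGroup (Fin n) ℝ) :
    Equiv.Perm (Mink n) where
  toFun := F b (A : Matrix (Fin n) (Fin n) ℝ)
  invFun := F (-((A : Matrix (Fin n) (Fin n) ℝ)ᵀ.mulVec b)) (A : Matrix (Fin n) (Fin n) ℝ)ᵀ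
  left_inv X := by
    rw [F_comp (orth_transpose_mem A.2), neg_add_cancel, orth_t_mul A.2, F_id]
  right_inv X := by
    rw [F_comp A.2, Matrix.mulVec_neg, mulVec_t_mulVec A.2, add_neg_cancel,
      orth_mul_t A.2, F_id]

end LPproof

namespace LPproof
variable {n : ℕ}

/-! ### The homomorphism φ and the semidirect product map Φ -/

noncomputable def mulVecAddEquiv (A : Matrix.orthogonalGroup (Fin n) ℝ) :
    (Fin n → ℝ) ≃+ (Fin n → ℝ) where
  toFun x := (A : Matrix (Fin n) (Fin n) ℝ).mulVec x
  invFun x := (A : Matrix (Fin n) (Fin n) ℝ)ᵀ.mulVec x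
  left_inv x := t_mulVec_mulVec A.2 x
  right_inv x := mulVec_t_mulVec A.2 x
  map_add' x y := Matrix.mulVec_add _ x y

noncomputable def phi (n : ℕ) :
    Matrix.orthogonalGroup (Fin n) ℝ →* MulAut (Multiplicative (Fin n → ℝ)) :=
  MonoidHom.mk' (fun A => AddEquiv.toMultiplicative (mulVecAddEquiv A)) (by
    intro A B
    refine MulEquiv.ext fun x => ?_
    show Multiplicative.ofAdd ((mulVecAddEquiv (A * B)) (Multiplicative.toAdd x)) = _
    simp only [mulVecAddEquiv, AddEquiv.coe_mk, Equiv.coe_fn_mk, Submonoid.coe_mul,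
      MulAut.mul_apply]
    rw [← Matrix.mulVec_mulVec]
    rfl)

noncomputable def Phi (n : ℕ) :
    SemidirectProduct (Multiplicative (Fin n → ℝ)) (Matrix.orthogonalGroup (Fin n) ℝ)
      (phi n) →* Equiv.Perm (Mink n) :=
  MonoidHom.mk' (fun p => Fperm (Multiplicative.toAdd p.left) p.right) (by
    intro p q
    apply Equiv.ext
    intro X
    show F _ _ X = (Fperm _ p.right) ((Fperm _ q.right) X)
    show F _ _ X = F _ _ (F _ _ X)
    rw [F_comp p.right.2]
    rfl)

lemma Phi_mem_LP (p) : Phi n p ∈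
    {g : Equiv.Perm (Mink n) | ∃ (lam : ℝ) (β : Fin n → ℝ)
      (A : Matrix (Fin n) (Fin n) ℝ) (tr : Mink n),
      0 < lam ∧ A ∈ Matrix.orthogonalGroup (Fin n) ℝ ∧ tr.2.2 = 0 ∧
        ∀ X, g X = LPaff lam β A tr X} := by
  refine ⟨1, (p.right : Matrix (Fin n) (Fin n) ℝ)ᵀ.mulVec (Multiplicative.toAdd p.left),
    (p.right : Matrix (Fin n) (Fin n) ℝ),
    ((Multiplicative.toAdd p.left ⬝ᵥ Multiplicative.toAdd p.left) / 2,
      Multiplicative.toAdd p.left, 0), one_pos, p.right.2, rfl, fun X => ?_⟩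
  exact F_eq_LPaff p.right.2 _ X

lemma Phi_mem_stab (p) :
    Phi n p ∈ MulAction.stabilizer (Equiv.Perm (Mink n)) (basePt n) := by
  rw [MulAction.mem_stabilizer_iff, Equiv.Perm.smul_def]
  show F _ _ (basePt n) = basePt n
  simp [F, basePt]

lemma Phi_inj : Function.Injective (Phi n) := by
  rw [injective_iff_map_eq_one]
  intro p hp
  have hF : ∀ X : Mink n, F (Multiplicative.toAdd p.left)
      (p.right : Matrix (Fin n) (Fin n) ℝ) X = X := fun X => by
    have := congrArg (fun (e : Equiv.Perm (Mink n)) => e X) hp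
    exact this
  have hb : p.left = 1 := by
    have h0 := hF (0, 0, 0)
    simp [F, Prod.ext_iff] at h0
    exact h0
  have hb0 : Multiplicative.toAdd p.left = 0 := by rw [hb]; rfl
  have hA : (p.right : Matrix (Fin n) (Fin n) ℝ) = 1 := by
    have hv : ∀ x : Fin n → ℝ, (p.right : Matrix (Fin n) (Fin n) ℝ).mulVec x = x := by
      intro x
      have h1 := hF (0, x, 1)
      simp [F, hb0, Prod.ext_iff] at h1
      exact h1
    ext i j
    have h2 := congrFun (hv (Pi.single j 1)) i
    rw [Matrix.mulVec_single] at h2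
    rw [Matrix.one_apply]
    simpa [Pi.single_apply] using h2
  exact SemidirectProduct.ext hb (Subtype.ext hA)

/-! ### The main iff -/

lemma main_iff (lam : ℝ) (β : Fin n → ℝ) (A : Matrix (Fin n) (Fin n) ℝ) (v : ℝ)
    (δ : Fin n → ℝ) (hlam : 0 < lam) :
    LPaff lam β A (v, δ, 0) (basePt n) = basePt n ↔
      lam = 1 ∧ v = (∑ i, β i ^ 2) / 2 ∧ δ = A.mulVec β := by
  rw [LPaff_def]
  simp only [basePt, Prod.mk.injEq, dotProduct_zero, Matrix.mulVec_zero,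
    mul_zero, mul_one, zero_add, add_zero, one_smul, sum_sq_eq]
  constructor
  · rintro ⟨h1, h2, h3⟩
    have hl : lam = 1 := by
      have := inv_eq_one.mp h3
      exact this
    subst hl
    simp only [inv_one] at h1 h2
    refine ⟨rfl, by linarith, ?_⟩
    have : -(A.mulVec β) + δ = 0 := by simpa using h2
    linear_combination (norm := module) this
  · rintro ⟨hl, hv, hδ⟩
    subst hl hv hδ
    refine ⟨by ring, ?_, inv_one⟩
    simp
end LPproof

namespace LPproof
variable {n : ℕ}

/-! ### The subgroup `LP(n)` -/

noncomputable def LPgrp (n : ℕ) : Subgroup (Equiv.Perm (Mink n)) where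
  carrier := {g | ∃ (lam : ℝ) (β : Fin n → ℝ) (A : Matrix (Fin n) (Fin n) ℝ) (tr : Mink n),
          0 < lam ∧ A ∈ Matrix.orthogonalGroup (Fin n) ℝ ∧ tr.2.2 = 0 ∧
            ∀ X, g X = LPaff lam β A tr X}
  one_mem' := ⟨1, 0, 1, 0, one_pos, one_mem _, rfl, fun X => (LPaff_one X).symm⟩
  mul_mem' := by
    rintro a b ⟨l1, β1, A1, t1, hl1, hA1, ht1, ha⟩ ⟨l2, β2, A2, t2, hl2, hA2, ht2, hb⟩
    refine ⟨l1 * l2, l1 • β2 + A2ᵀ.mulVec β1, A1 * A2, LPlin l1 β1 A1 t2 + t1,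
      mul_pos hl1 hl2, mul_mem hA1 hA2, ?_, fun X => ?_⟩
    · show (LPlin l1 β1 A1 t2).2.2 + t1.2.2 = 0
      simp [LPlin, Bmap, ht1, ht2]
    · rw [Equiv.Perm.mul_apply, hb, ha,
        LPaff_comp l1 l2 (ne_of_gt hl1) (ne_of_gt hl2) β1 β2 A1 A2 hA2]
  inv_mem' := by
    rintro g ⟨lam, β, A, tr, hl, hA, ht, hg⟩
    set β' : Fin n → ℝ := -(lam⁻¹ • A.mulVec β) with hβ'
    set tr' : Mink n := -(LPlin lam⁻¹ β' Aᵀ tr) with htr'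
    refine ⟨lam⁻¹, β', Aᵀ, tr', inv_pos.mpr hl, orth_transpose_mem hA, ?_, fun X => ?_⟩
    · show -(LPlin lam⁻¹ β' Aᵀ tr).2.2 = 0
      simp [LPlin, Bmap, ht]
    · have key : ∀ Y : Mink n, LPaff lam⁻¹ β' Aᵀ tr' (LPaff lam β A tr Y) = Y := by
        intro Y
        rw [LPaff_comp lam⁻¹ lam (inv_ne_zero (ne_of_gt hl)) (ne_of_gt hl) β' β Aᵀ A hA]
        have e1 : lam⁻¹ * lam = 1 := inv_mul_cancel₀ (ne_of_gt hl)
        have e2 : lam⁻¹ • β + Aᵀ.mulVec β' = 0 := by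
          rw [hβ', Matrix.mulVec_neg, Matrix.mulVec_smul, t_mulVec_mulVec hA]
          simp
        have e4 : LPlin lam⁻¹ β' Aᵀ tr + tr' = 0 := by rw [htr']; exact add_neg_cancel _
        rw [e1, e2, orth_t_mul hA, e4, LPaff_one]
      have h1 : g (g⁻¹ X) = X := Equiv.apply_symm_apply g X
      calc (g⁻¹ : Equiv.Perm (Mink n)) X
          = LPaff lam⁻¹ β' Aᵀ tr' (LPaff lam β A tr (g⁻¹ X)) := (key _).symm
        _ = LPaff lam⁻¹ β' Aᵀ tr' (g (g⁻¹ X)) := by rw [hg]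
        _ = LPaff lam⁻¹ β' Aᵀ tr' X := by rw [h1]

lemma range_eq (n : ℕ) : (Phi n).range =
    LPgrp n ⊓ MulAction.stabilizer (Equiv.Perm (Mink n)) (basePt n) := by
  ext g
  constructor
  · rintro ⟨p, rfl⟩
    exact Subgroup.mem_inf.mpr ⟨Phi_mem_LP p, Phi_mem_stab p⟩
  · rintro hg
    obtain ⟨⟨lam, β, A, tr, hl, hA, ht, hgeq⟩, hstab⟩ := Subgroup.mem_inf.mp hg
    have htr : tr = (tr.1, tr.2.1, 0) := by
      rw [← ht]
    have hfix : LPaff lam β A (tr.1, tr.2.1, 0) (basePt n) = basePt n := by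
      rw [← htr, ← hgeq]
      rw [MulAction.mem_stabilizer_iff, Equiv.Perm.smul_def] at hstab
      exact hstab
    obtain ⟨hl1, hv, hδ⟩ := (main_iff lam β A tr.1 tr.2.1 hl).mp hfix
    refine ⟨⟨Multiplicative.ofAdd (A.mulVec β), ⟨A, hA⟩⟩, ?_⟩
    apply Equiv.ext
    intro X
    show F (A.mulVec β) A X = g X
    rw [F_eq_LPaff hA, hgeq, t_mulVec_mulVec hA, dot_mulVec_mulVec hA, htr, hv, hδ, hl1,
      sum_sq_eq]

end LPproof

theorem LP_stabilizer_of_basePt (n : ℕ) :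
    (∀ (lam : ℝ) (β : Fin n → ℝ) (A : Matrix (Fin n) (Fin n) ℝ) (v : ℝ) (δ : Fin n → ℝ),
      0 < lam → A ∈ Matrix.orthogonalGroup (Fin n) ℝ →
        (LPaff lam β A (v, δ, 0) (basePt n) = basePt n ↔
          lam = 1 ∧ v = (∑ i, β i ^ 2) / 2 ∧ δ = A.mulVec β)) ∧
    ∃ LP : Subgroup (Equiv.Perm (Mink n)),
      ((LP : Set (Equiv.Perm (Mink n))) =
        {g | ∃ (lam : ℝ) (β : Fin n → ℝ) (A : Matrix (Fin n) (Fin n) ℝ) (tr : Mink n),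
          0 < lam ∧ A ∈ Matrix.orthogonalGroup (Fin n) ℝ ∧ tr.2.2 = 0 ∧
            ∀ X, g X = LPaff lam β A tr X}) ∧
      ∃ φ : Matrix.orthogonalGroup (Fin n) ℝ →* MulAut (Multiplicative (Fin n → ℝ)),
        (∀ (A : Matrix.orthogonalGroup (Fin n) ℝ) (x : Fin n → ℝ),
          Multiplicative.toAdd (φ A (Multiplicative.ofAdd x)) =
            (A : Matrix (Fin n) (Fin n) ℝ).mulVec x) ∧
        Nonempty (↥(LP ⊓ MulAction.stabilizer (Equiv.Perm (Mink n)) (basePt n)) ≃*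
          SemidirectProduct (Multiplicative (Fin n → ℝ))
            (Matrix.orthogonalGroup (Fin n) ℝ) φ) := by
  refine ⟨fun lam β A v δ hlam _ => LPproof.main_iff lam β A v δ hlam,
    LPproof.LPgrp n, rfl, LPproof.phi n, fun A x => rfl, ⟨?_⟩⟩
  exact (MulEquiv.subgroupCongr (LPproof.range_eq n).symm).trans
    (MonoidHom.ofInjective LPproof.Phi_inj).symm
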